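/- For every real t with 0 ≤ t ≤ 1, the exponential tree series satisfies Σ_{m=1}^∞ (m^{m−1}/m!) (t e^{−t})^m = t. Consequently, since m^{m−2}/(m−1)! = m^{m−1}/m!, for every real t with 0 < t ≤ 1 one has Σ_{m=2}^∞ (m^{m−2}/(m−1)!) (t e^{−t})^{m−1} = e^t − 1, and this quantity is at most 1 whenever t ≤ ln 2. -/

import Mathlib

open scoped BigOperators

noncomputable section

namespace TreeSeriesAux

open Real Finset

/-- Coefficients of the tree function: `c 0 = 0`, `c k = k^{k-1}/k!`. -/
def c : ℕ → ℝ := fun k => if k = 0 then 0 else (k : ℝ) ^ (k - 1) / (k.factorial : ℝ)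

lemma c_zero : c 0 = 0 := rfl

lemma c_succ (m : ℕ) : c (m + 1) = ((m + 1 : ℕ) : ℝ) ^ m / ((m + 1).factorial : ℝ) := by
  simp [c]

lemma c_nonneg (k : ℕ) : 0 ≤ c k := by unfold c; split <;> positivity

/-! ### Finite differences -/

lemma fwdDiff_iter_pow (j : ℕ) : ∀ n, j < n → (fwdDiff (1:ℝ))^[n] (fun x : ℝ => x ^ j) = 0 := by
  induction j using Nat.strong_induction_on with
  | _ j IH =>
    intro n hn
    obtain ⟨m, rfl⟩ : ∃ m, n = m + 1 := ⟨n - 1, by omega⟩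
    rw [Function.iterate_succ_apply]
    have hΔ : fwdDiff (1:ℝ) (fun x : ℝ => x ^ j)
        = ∑ i ∈ Finset.range j, (j.choose i : ℝ) • (fun x : ℝ => x ^ i) := by
      ext x
      simp only [fwdDiff, Finset.sum_apply, Pi.smul_apply, smul_eq_mul]
      rw [add_pow, Finset.sum_range_succ]
      simp [mul_comm]
    rw [hΔ, fwdDiff_iter_finset_sum]
    refine Finset.sum_eq_zero fun i hi => ?_
    have hij := Finset.mem_range.1 hi
    rw [fwdDiff_iter_const_smul, IH i hij m (by omega), smul_zero]

lemma sum_alt (j N : ℕ) (h : j < N) :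
    ∑ k ∈ Finset.range (N + 1), (-1 : ℝ) ^ (N - k) * (N.choose k : ℝ) * (k : ℝ) ^ j = 0 := by
  have h0 := congrFun (fwdDiff_iter_pow j N h) 0
  rw [fwdDiff_iter_eq_sum_shift] at h0
  simp only [Pi.zero_apply] at h0
  rw [← h0]
  refine Finset.sum_congr rfl fun k _ => ?_
  have hk : ((0:ℝ) + k • (1:ℝ)) ^ j = (k : ℝ) ^ j := by simp
  rw [hk, zsmul_eq_mul]
  push_cast
  ring

/-! ### Summability -/

lemma summable_rt : Summable (fun k : ℕ => ((k : ℝ) * Real.sqrt k)⁻¹) := by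
  have h := (Real.summable_nat_rpow_inv (p := 3/2)).2 (by norm_num)
  refine h.congr fun k => ?_
  rcases Nat.eq_zero_or_pos k with rfl | hk
  · simp
  · have hk' : (0:ℝ) < k := by exact_mod_cast hk
    rw [show (3/2 : ℝ) = 1 + 1/2 by norm_num, Real.rpow_add hk', Real.rpow_one,
      ← Real.sqrt_eq_rpow]

lemma summable_c_aux : Summable (fun k : ℕ => c k * Real.exp (-1) ^ k) := by
  obtain ⟨a, ha, hs⟩ := Stirling.stirlingSeq'_bounded_by_pos_constant
  refine Summable.of_nonneg_of_le (fun k => mul_nonneg (c_nonneg k) (by positivity))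
    (fun k => ?_) (summable_rt.mul_left (a * Real.sqrt 2)⁻¹)
  rcases Nat.eq_zero_or_pos k with rfl | hk
  · simp [c_zero]
  obtain ⟨n, rfl⟩ : ∃ n, k = n + 1 := ⟨k - 1, by omega⟩
  set K : ℝ := ((n + 1 : ℕ) : ℝ) with hKdef
  have hK : (0:ℝ) < K := by positivity
  have hD : (0:ℝ) < Real.sqrt (2 * K) * (K / Real.exp 1) ^ (n + 1) := by positivity
  have hfac : a * (Real.sqrt (2 * K) * (K / Real.exp 1) ^ (n + 1)) ≤ ((n+1).factorial : ℝ) := by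
    have h := hs n
    rw [Stirling.stirlingSeq] at h
    exact (le_div_iff₀ hD).1 h
  have h1 : a * Real.sqrt 2 * (K * Real.sqrt K) * K ^ n
      ≤ ((n+1).factorial : ℝ) * Real.exp 1 ^ (n+1) := by
    have heq : a * Real.sqrt 2 * (K * Real.sqrt K) * K ^ n
        = a * (Real.sqrt (2 * K) * (K / Real.exp 1) ^ (n+1)) * Real.exp 1 ^ (n+1) := by
      rw [Real.sqrt_mul (by norm_num : (0:ℝ) ≤ 2), div_pow]
      have hE : Real.exp 1 ^ (n+1) ≠ 0 := by positivity
      field_simp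
      ring
    rw [heq]
    exact mul_le_mul_of_nonneg_right hfac (by positivity)
  have hck : c (n+1) = K ^ n / ((n+1).factorial : ℝ) := by simp [c, hKdef]
  have hL : K ^ n / (((n+1).factorial : ℝ)) * (Real.exp 1 ^ (n+1))⁻¹
      = K ^ n / (((n+1).factorial : ℝ) * Real.exp 1 ^ (n+1)) := by
    rw [← div_eq_mul_inv, div_div]
  rw [hck, Real.exp_neg, inv_pow, hL, ← mul_inv, inv_eq_one_div,
    div_le_div_iff₀ (by positivity) (by positivity)]
  calc K ^ n * (a * Real.sqrt 2 * (K * Real.sqrt K))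
      = a * Real.sqrt 2 * (K * Real.sqrt K) * K ^ n := by ring
    _ ≤ ((n+1).factorial : ℝ) * Real.exp 1 ^ (n+1) := h1
    _ = 1 * (((n+1).factorial : ℝ) * Real.exp 1 ^ (n+1)) := by ring

lemma summable_c_of {y : ℝ} (hy : |y| ≤ Real.exp (-1)) :
    Summable fun k => c k * y ^ k := by
  refine Summable.of_abs (Summable.of_nonneg_of_le (fun k => abs_nonneg _) (fun k => ?_)
    summable_c_aux)
  rw [abs_mul, abs_of_nonneg (c_nonneg k), abs_pow]
  exact mul_le_mul_of_nonneg_left (pow_le_pow_left₀ (abs_nonneg y) hy k) (c_nonneg k)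

/-! ### Numerics -/

lemma exp_quarter_lt : Real.exp (1/4 : ℝ) < 4/3 := by
  have h := Real.add_one_lt_exp (x := -(1/4 : ℝ)) (by norm_num)
  rw [Real.exp_neg] at h
  have h2 : (3/4 : ℝ) < (Real.exp (1/4))⁻¹ := by linarith
  have h3 := (inv_lt_inv₀ (by positivity) (by norm_num : (0:ℝ) < 3/4)).2 h2
  rw [inv_inv] at h3
  linarith [h3]

lemma third_le_exp_neg_one : (1/3 : ℝ) ≤ Real.exp (-1) := by
  rw [Real.exp_neg]
  have h : Real.exp 1 ≤ 3 := by
    have := Real.exp_one_lt_d9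
    linarith
  calc (1/3 : ℝ) = 3⁻¹ := by norm_num
    _ ≤ (Real.exp 1)⁻¹ := inv_anti₀ (Real.exp_pos 1) h

lemma te_le_quarter {t : ℝ} (h0 : 0 ≤ t) (h1 : t ≤ 1/4) :
    t * Real.exp t ≤ Real.exp (-1) := by
  have h2 : Real.exp t ≤ Real.exp (1/4) := Real.exp_le_exp.2 h1
  have h3 : t * Real.exp t ≤ (1/4) * Real.exp (1/4) :=
    mul_le_mul h1 h2 (Real.exp_pos t).le (by norm_num)
  have h4 := exp_quarter_lt
  have h5 := third_le_exp_neg_one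
  linarith

lemma abs_te_lt {s : ℝ} (h0 : -(1/4) < s) (h1 : s < 1) :
    |s * Real.exp (-s)| < Real.exp (-1) := by
  rcases lt_trichotomy s 0 with hs | rfl | hs
  · have habs : |s * Real.exp (-s)| = (-s) * Real.exp (-s) := by
      rw [abs_mul, abs_of_neg hs, abs_of_pos (Real.exp_pos _)]
    rw [habs]
    have hb1 : (-s) * Real.exp (-s) < (1/4) * Real.exp (-s) :=
      mul_lt_mul_of_pos_right (by linarith) (Real.exp_pos _)
    have hb2 : (1/4 : ℝ) * Real.exp (-s) ≤ (1/4) * Real.exp (1/4) :=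
      mul_le_mul_of_nonneg_left (Real.exp_le_exp.2 (by linarith)) (by norm_num)
    have h4 := exp_quarter_lt
    have h5 := third_le_exp_neg_one
    linarith
  · simpa using Real.exp_pos (-1)
  · have habs : |s * Real.exp (-s)| = s * Real.exp (-s) := abs_of_pos (by positivity)
    rw [habs]
    have hlog : Real.log s < s - 1 := Real.log_lt_sub_one_of_pos hs (by linarith)
    have hrw : s * Real.exp (-s) = Real.exp (Real.log s + (-s)) := by
      rw [Real.exp_add, Real.exp_log hs]
    rw [hrw]
    exact Real.exp_lt_exp.2 (by linarith)

lemma abs_te_le {s : ℝ} (h0 : 0 ≤ s) (h1 : s ≤ 1) :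
    |s * Real.exp (-s)| ≤ Real.exp (-1) := by
  rcases eq_or_lt_of_le h0 with rfl | hs
  · simpa using (Real.exp_pos (-1)).le
  · rw [abs_of_pos (by positivity)]
    have hlog : Real.log s ≤ s - 1 := Real.log_le_sub_one_of_pos hs
    have hrw : s * Real.exp (-s) = Real.exp (Real.log s + (-s)) := by
      rw [Real.exp_add, Real.exp_log hs]
    rw [hrw]
    exact Real.exp_le_exp.2 (by linarith)

/-! ### The key identity for small `t` -/

lemma antidiag_term (n i d : ℕ) (t : ℝ) (hd : n = i + d) :
    c (i + 1) * t ^ (i + 1) * ((-((i : ℝ) + 1) * t) ^ (n - i) / ((n - i).factorial : ℝ))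
      = (-1 : ℝ) ^ (n - i) * (((n+1).choose (i+1) : ℕ) : ℝ) * (((i+1 : ℕ)) : ℝ) ^ n
          * t ^ (n+1) / ((n+1).factorial : ℝ) := by
  subst hd
  have hni : i + d - i = d := by omega
  rw [hni]
  have h2 : ((i + d + 1).choose (i+1) * (i+1).factorial * d.factorial : ℕ)
      = (i + d + 1).factorial := by
    have h := Nat.choose_mul_factorial_mul_factorial (show i + 1 ≤ i + d + 1 by omega)
    simpa [show i + d + 1 - (i + 1) = d by omega] using h
  have h2' : (((i + d + 1).choose (i+1) : ℕ) : ℝ) * ((i+1).factorial : ℝ) * (d.factorial : ℝ)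
      = ((i + d + 1).factorial : ℝ) := by exact_mod_cast congrArg (Nat.cast (R := ℝ)) h2
  have hf1 : ((i+1).factorial : ℝ) ≠ 0 := by positivity
  have hf2 : (d.factorial : ℝ) ≠ 0 := by positivity
  have hf3 : ((i+d+1).factorial : ℝ) ≠ 0 := by positivity
  rw [c_succ, show (-((i : ℝ) + 1) * t) = -(((i+1 : ℕ) : ℝ) * t) by push_cast; ring, neg_pow,
    mul_pow, eq_div_iff hf3, ← h2']
  field_simp
  ring

set_option maxHeartbeats 2000000 in
lemma key_small {t : ℝ} (h0 : 0 ≤ t) (h1 : t ≤ 1/4) :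
    ∑' m : ℕ, c (m + 1) * (t * Real.exp (-t)) ^ (m + 1) = t := by
  classical
  set g : ℕ × ℕ → ℝ := fun p =>
    c (p.1 + 1) * t ^ (p.1 + 1) * ((-((p.1 : ℝ) + 1) * t) ^ p.2 / (p.2.factorial : ℝ)) with hg
  have hexp : ∀ (x : ℝ), HasSum (fun k : ℕ => x ^ k / (k.factorial : ℝ)) (Real.exp x) := by
    intro x
    rw [Real.exp_eq_exp_ℝ]
    exact NormedSpace.expSeries_div_hasSum_exp x
  have hval : ∀ m : ℕ, c (m+1) * (t * Real.exp (-t)) ^ (m+1)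
      = c (m+1) * t ^ (m+1) * Real.exp (-((m:ℝ)+1) * t) := by
    intro m
    rw [mul_pow, mul_assoc]
    congr 1
    rw [show -((m:ℝ)+1) * t = ((m+1 : ℕ) : ℝ) * (-t) by push_cast; ring, Real.exp_nat_mul]
  have hrow : ∀ m : ℕ, HasSum (fun k => g (m, k))
      (c (m+1) * (t * Real.exp (-t)) ^ (m+1)) := by
    intro m
    rw [hval]
    exact (hexp (-((m:ℝ)+1) * t)).mul_left _
  have habs : ∀ p : ℕ × ℕ, |g p|
      = c (p.1 + 1) * t ^ (p.1 + 1) * ((((p.1:ℝ)+1) * t) ^ p.2 / (p.2.factorial : ℝ)) := by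
    intro p
    rw [hg]
    have h1' : |(-((p.1 : ℝ) + 1) * t) ^ p.2| = (((p.1:ℝ)+1) * t) ^ p.2 := by
      rw [abs_pow, abs_mul, abs_neg, abs_of_nonneg (by positivity : (0:ℝ) ≤ (p.1:ℝ)+1),
        abs_of_nonneg h0]
    rw [abs_mul, abs_mul, abs_div, h1', abs_of_nonneg (c_nonneg _),
      abs_of_nonneg (pow_nonneg h0 _), abs_of_nonneg (by positivity : (0:ℝ) ≤ (p.2.factorial : ℝ))]
  have hrowabs : ∀ m : ℕ, HasSum (fun k => |g (m, k)|)
      (c (m+1) * (t * Real.exp t) ^ (m+1)) := by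
    intro m
    have hv : c (m+1) * (t * Real.exp t) ^ (m+1)
        = c (m+1) * t ^ (m+1) * Real.exp (((m:ℝ)+1) * t) := by
      rw [mul_pow, mul_assoc]
      congr 1
      rw [show ((m:ℝ)+1) * t = ((m+1 : ℕ) : ℝ) * t by push_cast; ring, Real.exp_nat_mul]
    rw [hv]
    have h := (hexp (((m:ℝ)+1) * t)).mul_left (c (m+1) * t ^ (m+1))
    refine h.congr_fun fun k => ?_
    rw [habs (m, k)]
  -- summability of |g| over the product
  have hte : |t * Real.exp t| ≤ Real.exp (-1) := by
    rw [abs_of_nonneg (by positivity)]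
    exact te_le_quarter h0 h1
  have hsumrows : Summable (fun m : ℕ => c (m+1) * (t * Real.exp t) ^ (m+1)) :=
    (summable_nat_add_iff 1).2 (summable_c_of hte)
  have hgabs : Summable (fun p : ℕ × ℕ => |g p|) := by
    refine (summable_prod_of_nonneg (fun p => abs_nonneg _)).2
      ⟨fun m => (hrowabs m).summable, ?_⟩
    refine hsumrows.congr fun m => ?_
    exact ((hrowabs m).tsum_eq).symm
  have hgsum : Summable g := hgabs.of_abs
  -- LHS as a product tsum
  have hL : ∑' m : ℕ, c (m + 1) * (t * Real.exp (-t)) ^ (m + 1) = ∑' p : ℕ × ℕ, g p := by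
    rw [Summable.tsum_prod' hgsum fun m => (hrow m).summable]
    exact (tsum_congr fun m => (hrow m).tsum_eq).symm
  rw [hL]
  -- regroup along antidiagonals
  have hsig : Summable (fun x : (Σ n : ℕ, (Finset.HasAntidiagonal.antidiagonal n : Finset (ℕ × ℕ))) =>
      g (Finset.HasAntidiagonal.sigmaAntidiagonalEquivProd x)) :=
    (Equiv.summable_iff _).2 hgsum
  have hR : ∑' p : ℕ × ℕ, g p
      = ∑' n : ℕ, ∑ q ∈ Finset.HasAntidiagonal.antidiagonal n, g q := by
    rw [← Finset.HasAntidiagonal.sigmaAntidiagonalEquivProd.tsum_eq g]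
    rw [Summable.tsum_sigma' (fun n => (hasSum_fintype _).summable) hsig]
    exact tsum_congr fun n => Finset.tsum_subtype _ _
  rw [hR]
  -- compute each antidiagonal sum
  have hdiag : ∀ n : ℕ, ∑ q ∈ Finset.HasAntidiagonal.antidiagonal n, g q
      = if n = 0 then t else 0 := by
    intro n
    rw [Finset.Nat.sum_antidiagonal_eq_sum_range_succ_mk]
    rcases Nat.eq_zero_or_pos n with rfl | hn
    · simp [hg, c_succ]
    · rw [if_neg hn.ne']
      have hterm : ∀ i ∈ Finset.range (n+1), g (i, n - i)
          = ((-1 : ℝ) ^ (n - i) * (((n+1).choose (i+1) : ℕ) : ℝ) * (((i+1 : ℕ)) : ℝ) ^ n)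
              * (t ^ (n+1) / ((n+1).factorial : ℝ)) := by
        intro i hi
        have hin := Finset.mem_range.1 hi
        have := antidiag_term n i (n - i) t (by omega)
        rw [hg]
        simp only at this ⊢
        rw [this]
        ring
      rw [Finset.sum_congr rfl hterm, ← Finset.sum_mul]
      have halt := sum_alt n (n+1) (Nat.lt_succ_self n)
      rw [Finset.sum_range_succ'] at halt
      have hzero : (-1 : ℝ) ^ (n + 1 - 0) * ((n+1).choose 0 : ℝ) * ((0:ℕ) : ℝ) ^ n = 0 := by
        rw [Nat.cast_zero, zero_pow hn.ne', mul_zero]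
      rw [hzero, add_zero] at halt
      have heq : ∑ i ∈ Finset.range (n+1),
          (-1 : ℝ) ^ (n - i) * (((n+1).choose (i+1) : ℕ) : ℝ) * (((i+1 : ℕ)) : ℝ) ^ n = 0 := by
        rw [← halt]
        refine Finset.sum_congr rfl fun i _ => ?_
        have : n + 1 - (i + 1) = n - i := by omega
        rw [this]
        try push_cast
        try ring
      rw [heq, zero_mul]
  rw [tsum_congr hdiag]
  rw [tsum_eq_single 0 (fun n hn => by rw [if_neg hn])]
  simp

/-! ### Analytic continuation -/

def p : FormalMultilinearSeries ℝ ℝ ℝ := FormalMultilinearSeries.ofScalars ℝ c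

def r0 : NNReal := ⟨Real.exp (-1), (Real.exp_pos _).le⟩

lemma r0_pos : 0 < r0 := by
  rw [← NNReal.coe_lt_coe]
  exact Real.exp_pos _

lemma le_radius : (r0 : ENNReal) ≤ p.radius := by
  apply FormalMultilinearSeries.le_radius_of_summable_norm
  refine summable_c_aux.congr fun n => ?_
  rw [p, FormalMultilinearSeries.ofScalars_norm, Real.norm_eq_abs, abs_of_nonneg (c_nonneg n)]
  rfl

lemma hasF : HasFPowerSeriesOnBall p.sum p 0 p.radius :=
  p.hasFPowerSeriesOnBall (lt_of_lt_of_le (ENNReal.coe_pos.2 r0_pos) le_radius)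

lemma sum_eq {y : ℝ} (hy : |y| ≤ Real.exp (-1)) :
    p.sum y = ∑' m : ℕ, c (m + 1) * y ^ (m + 1) := by
  have h1 : p.sum y = ∑' n : ℕ, c n * y ^ n := by
    refine tsum_congr fun n => ?_
    rw [p, FormalMultilinearSeries.ofScalars_apply_eq, smul_eq_mul]
  rw [h1, Summable.tsum_eq_zero_add (summable_c_of hy)]
  simp [c_zero]

lemma mem_ball_of_abs {y : ℝ} (hy : |y| < Real.exp (-1)) :
    y ∈ EMetric.ball (0 : ℝ) p.radius := by
  refine EMetric.mem_ball.2 (lt_of_lt_of_le ?_ le_radius)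
  rw [edist_zero_right]
  have : ‖y‖₊ < r0 := by
    rw [← NNReal.coe_lt_coe]
    exact hy
  exact_mod_cast this

lemma phi_eq_on_U : Set.EqOn (fun s : ℝ => ∑' m : ℕ, c (m + 1) * (s * Real.exp (-s)) ^ (m + 1))
    id (Set.Ioo (-(1/4) : ℝ) 1) := by
  have hU : IsOpen (Set.Ioo (-(1/4):ℝ) 1) := isOpen_Ioo
  have hcomp : AnalyticOnNhd ℝ (fun s : ℝ => p.sum (s * Real.exp (-s)))
      (Set.Ioo (-(1/4):ℝ) 1) := by
    intro s hs
    have h1 : AnalyticAt ℝ (fun s : ℝ => s * Real.exp (-s)) s :=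
      (analyticAt_id).mul (analyticAt_rexp.comp (analyticAt_id.neg))
    have h2 := AnalyticAt.comp (𝕜 := ℝ) (g := p.sum) (f := fun s : ℝ => s * Real.exp (-s))
      (hasF.analyticAt_of_mem (mem_ball_of_abs (abs_te_lt hs.1 hs.2))) h1
    exact h2
  have hφ : AnalyticOnNhd ℝ (fun s : ℝ => ∑' m : ℕ, c (m + 1) * (s * Real.exp (-s)) ^ (m + 1))
      (Set.Ioo (-(1/4):ℝ) 1) := by
    intro s hs
    refine (hcomp s hs).congr ?_
    filter_upwards [hU.mem_nhds hs] with x hx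
    exact sum_eq (abs_te_lt hx.1 hx.2).le
  have hid : AnalyticOnNhd ℝ (id : ℝ → ℝ) (Set.Ioo (-(1/4):ℝ) 1) := fun s _ => analyticAt_id
  refine hφ.eqOn_of_preconnected_of_eventuallyEq hid isPreconnected_Ioo
    (show (1/8 : ℝ) ∈ Set.Ioo (-(1/4):ℝ) 1 by norm_num) ?_
  have hnb : Set.Ioo (0:ℝ) (1/4) ∈ nhds (1/8 : ℝ) := isOpen_Ioo.mem_nhds (by norm_num)
  filter_upwards [hnb] with x hx
  exact key_small hx.1.le hx.2.le

set_option maxHeartbeats 1000000 in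
lemma part1 {t : ℝ} (h0 : 0 ≤ t) (h1 : t ≤ 1) :
    ∑' m : ℕ, c (m + 1) * (t * Real.exp (-t)) ^ (m + 1) = t := by
  rcases lt_or_eq_of_le h1 with hlt | rfl
  · exact phi_eq_on_U ⟨by linarith, hlt⟩
  · set φ := fun s : ℝ => ∑' m : ℕ, c (m + 1) * (s * Real.exp (-s)) ^ (m + 1) with hφdef
    show φ 1 = 1
    have hcont : ContinuousOn φ (Set.Icc (0:ℝ) 1) := by
      refine continuousOn_tsum (u := fun m => c (m+1) * Real.exp (-1) ^ (m+1))
        (fun m => Continuous.continuousOn ?_)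
        ((summable_nat_add_iff 1).2 (summable_c_of (by
          rw [abs_of_nonneg (Real.exp_pos _).le]))) (fun m s hs => ?_)
      · exact continuous_const.mul ((continuous_id.mul
          (Real.continuous_exp.comp continuous_neg)).pow _)
      · rw [Real.norm_eq_abs, abs_mul, abs_of_nonneg (c_nonneg _), abs_pow]
        exact mul_le_mul_of_nonneg_left
          (pow_le_pow_left₀ (abs_nonneg _) (abs_te_le hs.1 hs.2) _) (c_nonneg _)
    have hseq0 : Filter.Tendsto (fun n : ℕ => ((n:ℝ)+2)⁻¹) Filter.atTop (nhds 0) := by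
      apply Filter.Tendsto.inv_tendsto_atTop
      exact Filter.tendsto_atTop_add_const_right _ 2 tendsto_natCast_atTop_atTop
    have hseq : Filter.Tendsto (fun n : ℕ => 1 - ((n:ℝ)+2)⁻¹) Filter.atTop (nhds 1) := by
      have := tendsto_const_nhds (x := (1:ℝ)) (f := Filter.atTop (α := ℕ)) |>.sub hseq0
      simpa using this
    have hmem : ∀ n : ℕ, (1 - ((n:ℝ)+2)⁻¹) ∈ Set.Icc (0:ℝ) 1 := by
      intro n
      have h2 : (0:ℝ) < (n:ℝ)+2 := by positivity
      have h3 : ((n:ℝ)+2)⁻¹ ≤ 1 := by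
        rw [inv_le_one_iff₀]
        right; linarith
      have h4 : (0:ℝ) < ((n:ℝ)+2)⁻¹ := by positivity
      constructor <;> [linarith; linarith]
    have htend1 : Filter.Tendsto (fun n : ℕ => φ (1 - ((n:ℝ)+2)⁻¹)) Filter.atTop
        (nhds (φ 1)) := by
      refine ((hcont 1 ⟨zero_le_one, le_rfl⟩).tendsto).comp ?_
      exact tendsto_nhdsWithin_of_tendsto_nhds_of_eventually_within _ hseq
        (Filter.Eventually.of_forall hmem)
    have htend2 : Filter.Tendsto (fun n : ℕ => φ (1 - ((n:ℝ)+2)⁻¹)) Filter.atTop (nhds 1) := by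
      refine hseq.congr fun n => ?_
      have h2 : (0:ℝ) < (n:ℝ)+2 := by positivity
      have h4 : (0:ℝ) < ((n:ℝ)+2)⁻¹ := by positivity
      have h3 : ((n:ℝ)+2)⁻¹ ≤ 1/2 := by
        rw [inv_le_comm₀ h2 (by norm_num)]
        norm_num
      exact (phi_eq_on_U ⟨by norm_num at h3 ⊢; linarith, by linarith⟩).symm
    exact tendsto_nhds_unique htend1 htend2

set_option maxHeartbeats 1000000 in
lemma part2 {t : ℝ} (h0 : 0 < t) (h1 : t ≤ 1) :
    ∑' m : ℕ, (((m + 2 : ℕ) : ℝ) ^ m / ((m + 1).factorial : ℝ)) *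
      (t * Real.exp (-t)) ^ (m + 1) = Real.exp t - 1 := by
  set x : ℝ := t * Real.exp (-t) with hx
  have hxpos : 0 < x := mul_pos h0 (Real.exp_pos _)
  have hxne : x ≠ 0 := hxpos.ne'
  have hS1 : ∑' m : ℕ, c (m+1) * x ^ (m+1) = t := part1 h0.le h1
  have hsum1 : Summable (fun m : ℕ => c (m+1) * x ^ (m+1)) :=
    (summable_nat_add_iff 1).2 (summable_c_of (abs_te_le h0.le h1))
  have hshift : ∑' m : ℕ, c (m+2) * x ^ (m+2) = t - c 1 * x ^ 1 := by
    have h := Summable.tsum_eq_zero_add hsum1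
    rw [hS1] at h
    have h2 : ∑' m : ℕ, c (m+1+1) * x ^ (m+1+1) = t - c (0+1) * x ^ (0+1) := by
      linarith [h]
    simpa using h2
  have hc1 : c 1 = 1 := by simp [c]
  rw [hc1, one_mul, pow_one] at hshift
  have hterm : ∀ m : ℕ, x * ((((m + 2 : ℕ) : ℝ) ^ m / ((m + 1).factorial : ℝ)) * x ^ (m+1))
      = c (m+2) * x ^ (m+2) := by
    intro m
    have hc2 : c (m+2) = ((m + 2 : ℕ) : ℝ) ^ (m+1) / ((m+2).factorial : ℝ) := c_succ (m+1)
    rw [hc2, Nat.factorial_succ (m+1)]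
    have hf : ((m+1).factorial : ℝ) ≠ 0 := by positivity
    have hm2 : ((m + 2 : ℕ) : ℝ) ≠ 0 := by positivity
    push_cast
    field_simp
    ring
  have hmul : x * ∑' m : ℕ, (((m + 2 : ℕ) : ℝ) ^ m / ((m + 1).factorial : ℝ)) * x ^ (m+1)
      = t - x := by
    rw [← tsum_mul_left, tsum_congr hterm, hshift]
  have hgoal : ∑' m : ℕ, (((m + 2 : ℕ) : ℝ) ^ m / ((m + 1).factorial : ℝ)) * x ^ (m+1)
      = (t - x) / x := by
    rw [eq_div_iff hxne, mul_comm] at *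
    linarith [hmul]
  rw [hgoal, hx]
  rw [div_eq_iff (by positivity : t * Real.exp (-t) ≠ 0), Real.exp_neg]
  have he : Real.exp t ≠ 0 := Real.exp_ne_zero t
  field_simp

end TreeSeriesAux

set_option maxHeartbeats 1000000 in
/-- The exponential tree series: for `0 ≤ t ≤ 1`,
`Σ_{m ≥ 1} (m^{m-1}/m!) (t e^{-t})^m = t`; consequently, since
`m^{m-2}/(m-1)! = m^{m-1}/m!`, for `0 < t ≤ 1`,
`Σ_{m ≥ 2} (m^{m-2}/(m-1)!) (t e^{-t})^{m-1} = e^t - 1`, which is at most `1` when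
`t ≤ log 2`. -/
theorem tree_series_identity (t : ℝ) :
    (0 ≤ t → t ≤ 1 →
      ∑' m : ℕ, (((m + 1 : ℕ) : ℝ) ^ m / ((m + 1).factorial : ℝ)) *
        (t * Real.exp (-t)) ^ (m + 1) = t) ∧
    (0 < t → t ≤ 1 →
      ∑' m : ℕ, (((m + 2 : ℕ) : ℝ) ^ m / ((m + 1).factorial : ℝ)) *
        (t * Real.exp (-t)) ^ (m + 1) = Real.exp t - 1) ∧
    (0 < t → t ≤ Real.log 2 →
      ∑' m : ℕ, (((m + 2 : ℕ) : ℝ) ^ m / ((m + 1).factorial : ℝ)) *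
        (t * Real.exp (-t)) ^ (m + 1) ≤ 1) := by
  have hlog2 : Real.log 2 ≤ 1 := by
    rw [Real.log_le_iff_le_exp (by norm_num)]
    have := Real.exp_one_gt_d9
    linarith
  refine ⟨fun h0 h1 => ?_, fun h0 h1 => TreeSeriesAux.part2 h0 h1, fun h0 h2 => ?_⟩
  · refine Eq.trans ?_ (TreeSeriesAux.part1 h0 h1)
    exact tsum_congr fun m => by rw [TreeSeriesAux.c_succ]
  · have h1 : t ≤ 1 := h2.trans hlog2
    rw [TreeSeriesAux.part2 h0 h1]
    have hexp : Real.exp t ≤ 2 := by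
      calc Real.exp t ≤ Real.exp (Real.log 2) := Real.exp_le_exp.2 h2
        _ = 2 := Real.exp_log (by norm_num)
    linarith
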